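/- arXiv:1110.3434 — 8 statements merged into one kernel-verified Lean document; each statement's English description precedes it below -/
import Mathlib

section
/- For 0 ≤ i ≤ d, F_i ∘ F_i' ∘ F_i = F_i and F_i' ∘ F_i ∘ F_i' = F_i'. -/
theorem aux1 {K V : Type*} [Field K] [AddCommGroup V] [Module K V]
    (d i : ℕ) (U U' : ℕ → Submodule K V)
    (hpartial : ∀ j ≤ d, (⨆ h ∈ Finset.Iic j, U h) = (⨆ h ∈ Finset.Iic j, U' h))
    (F F' : ℕ → V →ₗ[K] V)
    (hFid : ∀ j, ∀ x ∈ U j, F j x = x)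
    (hFzero : ∀ j k, j ≠ k → ∀ x ∈ U k, F j x = 0)
    (hF'id : ∀ j, ∀ x ∈ U' j, F' j x = x)
    (hF'zero : ∀ j k, j ≠ k → ∀ x ∈ U' k, F' j x = 0)
    (hid : i ≤ d) : ∀ x ∈ U i, F i (F' i x) = x := by
  intro x hx
  have hker : (⨆ h ∈ Finset.Iio i, U' h) ≤ LinearMap.ker (F i) := by
    cases i with
    | zero => simp
    | succ k =>
      have he : (Finset.Iio (k+1)) = Finset.Iic k := by ext; simp [Nat.lt_succ_iff]
      rw [he, ← hpartial k (by omega)]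
      refine iSup_le fun h => iSup_le fun hh => ?_
      intro y hy
      simp only [LinearMap.mem_ker]
      exact hFzero (k+1) h (by simp only [Finset.mem_Iic] at hh; omega) y hy
  have hmem : x ∈ ⨆ h ∈ Finset.Iic i, U' h := by
    rw [← hpartial i hid]
    exact le_iSup₂ (f := fun h (_ : h ∈ Finset.Iic i) => U h) i (Finset.mem_Iic.2 le_rfl) hx
  have hsub : x - F' i x ∈ ⨆ h ∈ Finset.Iio i, U' h := by
    have hcomap : (⨆ h ∈ Finset.Iic i, U' h) ≤
        Submodule.comap (LinearMap.id - F' i) (⨆ h ∈ Finset.Iio i, U' h) := by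
      refine iSup_le fun h => iSup_le fun hh => fun y hy => ?_
      simp only [Submodule.mem_comap, LinearMap.sub_apply, LinearMap.id_apply]
      rcases eq_or_ne h i with rfl | hne
      · rw [hF'id h y hy, sub_self]
        exact Submodule.zero_mem _
      · rw [hF'zero i h (Ne.symm hne) y hy, sub_zero]
        exact le_iSup₂ (f := fun h (_ : h ∈ Finset.Iio i) => U' h) h
          (Finset.mem_Iio.2 (lt_of_le_of_ne (Finset.mem_Iic.1 hh) hne)) hy
    simpa using hcomap hmem
  have h0 : F i (x - F' i x) = 0 := hker hsub
  have : F i x - F i (F' i x) = 0 := by rw [← map_sub]; exact h0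
  have hfx : F i x = x := hFid i x hx
  rw [hfx] at this
  exact (sub_eq_zero.mp this).symm

/-- For ,  and . -/
theorem stmt1 {K V : Type*} [Field K] [AddCommGroup V] [Module K V]
    [FiniteDimensional K V] (d : ℕ)
    (U U' : ℕ → Submodule K V)
    (hUbot : ∀ i, d < i → U i = ⊥) (hU'bot : ∀ i, d < i → U' i = ⊥)
    (hUtop : iSup U = ⊤) (hU'top : iSup U' = ⊤)
    (hUind : iSupIndep U)
    (hU'ind : iSupIndep U')
    (hpartial : ∀ i ≤ d,
      (⨆ h ∈ Finset.Iic i, U h) = (⨆ h ∈ Finset.Iic i, U' h))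
    (F F' : ℕ → V →ₗ[K] V)
    (hFid : ∀ i, ∀ x ∈ U i, F i x = x)
    (hFzero : ∀ i j, i ≠ j → ∀ x ∈ U j, F i x = 0)
    (hF'id : ∀ i, ∀ x ∈ U' i, F' i x = x)
    (hF'zero : ∀ i j, i ≠ j → ∀ x ∈ U' j, F' i x = 0) :
    ∀ i ≤ d, F i ∘ₗ F' i ∘ₗ F i = F i ∧ F' i ∘ₗ F i ∘ₗ F' i = F' i := by
  intro i hi
  have key : ∀ x ∈ U i, F i (F' i x) = x :=
    aux1 d i U U' hpartial F F' hFid hFzero hF'id hF'zero hi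
  have key' : ∀ x ∈ U' i, F' i (F i x) = x :=
    aux1 d i U' U (fun j hj => (hpartial j hj).symm) F' F hF'id hF'zero hFid hFzero hi
  constructor
  · have hle : iSup U ≤ LinearMap.ker (F i ∘ₗ F' i ∘ₗ F i - F i) := by
      refine iSup_le fun j y hy => ?_
      simp only [LinearMap.mem_ker, LinearMap.sub_apply, LinearMap.comp_apply]
      rcases eq_or_ne j i with rfl | hne
      · rw [hFid j y hy, key y hy]; exact sub_self y
      · rw [hFzero i j (Ne.symm hne) y hy, map_zero, map_zero, sub_self]
    rw [hUtop] at hle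
    ext x
    have := hle (Submodule.mem_top (x := x))
    simp only [LinearMap.mem_ker, LinearMap.sub_apply] at this
    simpa [sub_eq_zero] using this
  · have hle : iSup U' ≤ LinearMap.ker (F' i ∘ₗ F i ∘ₗ F' i - F' i) := by
      refine iSup_le fun j y hy => ?_
      simp only [LinearMap.mem_ker, LinearMap.sub_apply, LinearMap.comp_apply]
      rcases eq_or_ne j i with rfl | hne
      · rw [hF'id j y hy, key' y hy]; exact sub_self y
      · rw [hF'zero i j (Ne.symm hne) y hy, map_zero, map_zero, sub_self]
    rw [hU'top] at hle
    ext x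
    have := hle (Submodule.mem_top (x := x))
    simp only [LinearMap.mem_ker, LinearMap.sub_apply] at this
    simpa [sub_eq_zero] using this
end

section
/- For 0 ≤ i ≤ d, the restriction of F_i' to U_i is a bijection U_i → U_i', the restriction of F_i to U_i' is a bijection U_i' → U_i, and these two bijections are mutually inverse. -/
section Aux

variable {K V : Type*} [Field K] [AddCommGroup V] [Module K V]

lemma aux_mem (U' : ℕ → Submodule K V) (F' : ℕ → V →ₗ[K] V)
    (hU'top : iSup U' = ⊤)
    (hF'id : ∀ i, ∀ x ∈ U' i, F' i x = x)
    (hF'zero : ∀ i j, i ≠ j → ∀ x ∈ U' j, F' i x = 0)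
    (i : ℕ) (x : V) : F' i x ∈ U' i := by
  have hx : x ∈ iSup U' := by rw [hU'top]; trivial
  refine Submodule.iSup_induction (motive := fun y => F' i y ∈ U' i) U' hx ?_ ?_ ?_
  · intro j y hy
    by_cases h : i = j
    · subst h; rw [hF'id i y hy]; exact hy
    · rw [hF'zero i j h y hy]; exact zero_mem _
  · simp
  · intro a b ha hb
    rw [map_add]; exact add_mem ha hb

lemma aux_zero (U : ℕ → Submodule K V) (F : ℕ → V →ₗ[K] V)
    (hFzero : ∀ i j, i ≠ j → ∀ x ∈ U j, F i x = 0)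
    (i j : ℕ) (hij : j < i) (x : V) (hx : x ∈ ⨆ h ∈ Finset.Iic j, U h) :
    F i x = 0 := by
  rw [iSup_subtype'] at hx
  refine Submodule.iSup_induction (motive := fun y => F i y = 0) _ hx ?_ (map_zero _) ?_
  · intro h y hy
    refine hFzero i h ?_ y hy
    have := h.2
    simp only [Finset.mem_Iic] at this
    omega
  · intro a b ha hb
    rw [map_add, ha, hb, add_zero]

lemma aux_key (d : ℕ) (U U' : ℕ → Submodule K V)
    (hpartial : ∀ i ≤ d,
      (⨆ h ∈ Finset.Iic i, U h) = (⨆ h ∈ Finset.Iic i, U' h))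
    (F F' : ℕ → V →ₗ[K] V)
    (hFid : ∀ i, ∀ x ∈ U i, F i x = x)
    (hFzero : ∀ i j, i ≠ j → ∀ x ∈ U j, F i x = 0)
    (hF'id : ∀ i, ∀ x ∈ U' i, F' i x = x)
    (hF'zero : ∀ i j, i ≠ j → ∀ x ∈ U' j, F' i x = 0)
    (i : ℕ) (hi : i ≤ d) (x : V) (hx : x ∈ U i) :
    F i (F' i x) = x := by
  have hx1 : x ∈ ⨆ h ∈ Finset.Iic i, U h :=
    Submodule.mem_iSup_of_mem i (Submodule.mem_iSup_of_mem (Finset.mem_Iic.2 le_rfl) hx)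
  rw [hpartial i hi] at hx1
  have main : F i (F' i x) = F i x := by
    rw [iSup_subtype'] at hx1
    refine Submodule.iSup_induction (motive := fun y => F i (F' i y) = F i y) _ hx1 ?_ ?_ ?_
    · intro h y hy
      have hh : h.1 ≤ i := Finset.mem_Iic.1 h.2
      rcases eq_or_lt_of_le hh with heq | hlt
      · rw [heq] at hy; rw [hF'id i y hy]
      · rw [hF'zero i h.1 (by omega) y hy, map_zero]
        have hy' : y ∈ ⨆ k ∈ Finset.Iic h.1, U' k :=
          Submodule.mem_iSup_of_mem h.1
            (Submodule.mem_iSup_of_mem (Finset.mem_Iic.2 le_rfl) hy)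
        rw [← hpartial h.1 (by omega)] at hy'
        exact (aux_zero U F hFzero i h.1 hlt y hy').symm
    · simp
    · intro a b ha hb
      simp only [map_add, ha, hb]
  rw [main, hFid i x hx]

end Aux

theorem stmt2 {K V : Type*} [Field K] [AddCommGroup V] [Module K V]
    [FiniteDimensional K V] (d : ℕ)
    (U U' : ℕ → Submodule K V)
    (hUbot : ∀ i, d < i → U i = ⊥) (hU'bot : ∀ i, d < i → U' i = ⊥)
    (hUtop : iSup U = ⊤) (hU'top : iSup U' = ⊤)
    (hUind : iSupIndep U)
    (hU'ind : iSupIndep U')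
    (hpartial : ∀ i ≤ d,
      (⨆ h ∈ Finset.Iic i, U h) = (⨆ h ∈ Finset.Iic i, U' h))
    (F F' : ℕ → V →ₗ[K] V)
    (hFid : ∀ i, ∀ x ∈ U i, F i x = x)
    (hFzero : ∀ i j, i ≠ j → ∀ x ∈ U j, F i x = 0)
    (hF'id : ∀ i, ∀ x ∈ U' i, F' i x = x)
    (hF'zero : ∀ i j, i ≠ j → ∀ x ∈ U' j, F' i x = 0) :
    ∀ i ≤ d,
      Set.BijOn (F' i) (U i) (U' i) ∧
      Set.BijOn (F i) (U' i) (U i) ∧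
      (∀ x ∈ U i, F i (F' i x) = x) ∧
      (∀ y ∈ U' i, F' i (F i y) = y) := by
  intro i hi
  have hpartial' : ∀ i ≤ d,
      (⨆ h ∈ Finset.Iic i, U' h) = (⨆ h ∈ Finset.Iic i, U h) :=
    fun i hi => (hpartial i hi).symm
  have key1 : ∀ x ∈ U i, F i (F' i x) = x :=
    fun x hx => aux_key d U U' hpartial F F' hFid hFzero hF'id hF'zero i hi x hx
  have key2 : ∀ y ∈ U' i, F' i (F i y) = y :=
    fun y hy => aux_key d U' U hpartial' F' F hF'id hF'zero hFid hFzero i hi y hy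
  have mem1 : ∀ x : V, F' i x ∈ U' i :=
    fun x => aux_mem U' F' hU'top hF'id hF'zero i x
  have mem2 : ∀ x : V, F i x ∈ U i :=
    fun x => aux_mem U F hUtop hFid hFzero i x
  refine ⟨⟨fun x _ => mem1 x, fun a ha b hb h => ?_, fun y hy => ⟨F i y, mem2 y, key2 y hy⟩⟩,
    ⟨fun x _ => mem2 x, fun a ha b hb h => ?_, fun y hy => ⟨F' i y, mem1 y, key1 y hy⟩⟩,
    key1, key2⟩
  · rw [← key1 a ha, ← key1 b hb, h]
  · rw [← key2 a ha, ← key2 b hb, h]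
end

section
/- The linear map Δ = Σ_{h=0}^d F_h' ∘ F_h is invertible, and its inverse is Δ' = Σ_{h=0}^d F_h ∘ F_h'. -/
section Aux

variable {K V : Type*} [Field K] [AddCommGroup V] [Module K V]

/-- The range of each projection lies in the corresponding submodule. -/
lemma stmt3_mem_range (d : ℕ) (U : ℕ → Submodule K V) (hUtop : iSup U = ⊤)
    (F : ℕ → V →ₗ[K] V)
    (hFid : ∀ i, ∀ x ∈ U i, F i x = x)
    (hFzero : ∀ i j, i ≠ j → ∀ x ∈ U j, F i x = 0)
    (i : ℕ) (x : V) : F i x ∈ U i := by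
  have hx : x ∈ ⨆ j, U j := by rw [hUtop]; trivial
  refine Submodule.iSup_induction (motive := fun y => F i y ∈ U i) U hx ?_ ?_ ?_
  · intro j y hy
    rcases eq_or_ne i j with rfl | hne
    · rw [hFid i y hy]; exact hy
    · rw [hFzero i j hne y hy]; exact zero_mem _
  · show F i 0 ∈ U i
    rw [map_zero]; exact zero_mem _
  · intro y z hy hz
    show F i (y + z) ∈ U i
    rw [map_add]; exact add_mem hy hz

/-- The projections sum to the identity. -/
lemma stmt3_sum_id (d : ℕ) (U : ℕ → Submodule K V)
    (hUbot : ∀ i, d < i → U i = ⊥) (hUtop : iSup U = ⊤)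
    (F : ℕ → V →ₗ[K] V)
    (hFid : ∀ i, ∀ x ∈ U i, F i x = x)
    (hFzero : ∀ i j, i ≠ j → ∀ x ∈ U j, F i x = 0)
    (x : V) : ∑ h ∈ Finset.range (d + 1), F h x = x := by
  have hx : x ∈ ⨆ j, U j := by rw [hUtop]; trivial
  refine Submodule.iSup_induction
    (motive := fun y => ∑ h ∈ Finset.range (d + 1), F h y = y) U hx ?_ ?_ ?_
  · intro j y hy
    by_cases hj : j ≤ d
    · rw [Finset.sum_eq_single j (fun k _ hk => hFzero k j hk y hy)
        (by intro h; exact absurd (Finset.mem_range.2 (by omega)) h)]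
      exact hFid j y hy
    · have : y = 0 := by
        have := hUbot j (by omega); rw [this, Submodule.mem_bot] at hy; exact hy
      simp [this]
  · simp
  · intro y z hy hz; simp only [map_add, Finset.sum_add_distrib, hy, hz]

/-- A projection with large index kills a partial sum. -/
lemma stmt3_vanish (U : ℕ → Submodule K V) (F : ℕ → V →ₗ[K] V)
    (hFzero : ∀ i j, i ≠ j → ∀ x ∈ U j, F i x = 0)
    (k i : ℕ) (hki : k < i) (x : V) (hx : x ∈ ⨆ h ∈ Finset.Iic k, U h) :
    F i x = 0 := by
  rw [iSup_subtype'] at hx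
  refine Submodule.iSup_induction (motive := fun y => F i y = 0) _ hx ?_ ?_ ?_
  · intro j y hy
    exact hFzero i j.1 (by have := Finset.mem_Iic.1 j.2; omega) y hy
  · simp
  · intro y z hy hz; rw [map_add, hy, hz, add_zero]

lemma stmt3_aux (d : ℕ) (U U' : ℕ → Submodule K V)
    (hUbot : ∀ i, d < i → U i = ⊥) (hU'bot : ∀ i, d < i → U' i = ⊥)
    (hUtop : iSup U = ⊤) (hU'top : iSup U' = ⊤)
    (hpartial : ∀ i ≤ d,
      (⨆ h ∈ Finset.Iic i, U h) = (⨆ h ∈ Finset.Iic i, U' h))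
    (F F' : ℕ → V →ₗ[K] V)
    (hFid : ∀ i, ∀ x ∈ U i, F i x = x)
    (hFzero : ∀ i j, i ≠ j → ∀ x ∈ U j, F i x = 0)
    (hF'id : ∀ i, ∀ x ∈ U' i, F' i x = x)
    (hF'zero : ∀ i j, i ≠ j → ∀ x ∈ U' j, F' i x = 0) :
    (∑ h ∈ Finset.range (d + 1), F h ∘ₗ F' h) ∘ₗ
      (∑ h ∈ Finset.range (d + 1), F' h ∘ₗ F h) = LinearMap.id := by
  ext x
  simp only [LinearMap.comp_apply, LinearMap.sum_apply, LinearMap.id_apply]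
  -- collapse the double sum
  have collapse : ∀ i ∈ Finset.range (d + 1),
      ∑ j ∈ Finset.range (d + 1), (F i) ((F' i) ((F' j) ((F j) x)))
        = (F i) ((F' i) ((F i) x)) := by
    intro i hi
    rw [Finset.sum_eq_single_of_mem i hi (fun j _ hji => by
      rw [hF'zero i j (by omega) _
        (stmt3_mem_range d U' hU'top F' hF'id hF'zero j ((F j) x)),
        map_zero]),
      hF'id i _ (stmt3_mem_range d U' hU'top F' hF'id hF'zero i ((F i) x))]
  calc ∑ i ∈ Finset.range (d + 1),
        (F i) ((F' i) (∑ j ∈ Finset.range (d + 1), (F' j) ((F j) x)))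
      = ∑ i ∈ Finset.range (d + 1), (F i) ((F' i) ((F i) x)) := by
        refine Finset.sum_congr rfl fun i hi => ?_
        rw [map_sum, map_sum]; exact collapse i hi
    _ = ∑ i ∈ Finset.range (d + 1), (F i) x := by
        refine Finset.sum_congr rfl fun i hi => ?_
        have hid : i ≤ d := by have := Finset.mem_range.1 hi; omega
        set v := (F i) x with hv
        have hvU : v ∈ U i := stmt3_mem_range d U hUtop F hFid hFzero i x
        -- F i (F' k v) = 0 for k ≠ i
        have hzero : ∀ k ∈ Finset.range (d + 1), k ≠ i →
            (F i) ((F' k) v) = 0 := by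
          intro k hk hki
          rcases lt_or_gt_of_ne hki with hlt | hgt
          · -- k < i : F' k v ∈ U' k ⊆ ⨆_{h ≤ k} U' h = ⨆_{h ≤ k} U h
            have hmem : (F' k) v ∈ ⨆ h ∈ Finset.Iic k, U h := by
              rw [hpartial k (by have := Finset.mem_range.1 hk; omega)]
              exact Submodule.mem_iSup_of_mem k (Submodule.mem_iSup_of_mem
                (Finset.mem_Iic.2 le_rfl)
                (stmt3_mem_range d U' hU'top F' hF'id hF'zero k v))
            exact stmt3_vanish U F hFzero k i hlt _ hmem
          · -- k > i : v ∈ U i ⊆ ⨆_{h ≤ i} U h = ⨆_{h ≤ i} U' h, so F' k v = 0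
            have hmem : v ∈ ⨆ h ∈ Finset.Iic i, U' h := by
              rw [← hpartial i hid]
              exact Submodule.mem_iSup_of_mem i (Submodule.mem_iSup_of_mem
                (Finset.mem_Iic.2 le_rfl) hvU)
            rw [stmt3_vanish U' F' hF'zero i k hgt v hmem, map_zero]
        have hsum : ∑ k ∈ Finset.range (d + 1), (F i) ((F' k) v) = v := by
          rw [← map_sum, stmt3_sum_id d U' hU'bot hU'top F' hF'id hF'zero v]
          exact hFid i v hvU
        rw [← Finset.sum_eq_single_of_mem i hi
          (fun k hk hki => hzero k hk hki)]
        exact hsum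
    _ = x := stmt3_sum_id d U hUbot hUtop F hFid hFzero x

end Aux

theorem stmt3 {K V : Type*} [Field K] [AddCommGroup V] [Module K V]
    [FiniteDimensional K V] (d : ℕ)
    (U U' : ℕ → Submodule K V)
    (hUbot : ∀ i, d < i → U i = ⊥) (hU'bot : ∀ i, d < i → U' i = ⊥)
    (hUtop : iSup U = ⊤) (hU'top : iSup U' = ⊤)
    (hUind : iSupIndep U)
    (hU'ind : iSupIndep U')
    (hpartial : ∀ i ≤ d,
      (⨆ h ∈ Finset.Iic i, U h) = (⨆ h ∈ Finset.Iic i, U' h))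
    (F F' : ℕ → V →ₗ[K] V)
    (hFid : ∀ i, ∀ x ∈ U i, F i x = x)
    (hFzero : ∀ i j, i ≠ j → ∀ x ∈ U j, F i x = 0)
    (hF'id : ∀ i, ∀ x ∈ U' i, F' i x = x)
    (hF'zero : ∀ i j, i ≠ j → ∀ x ∈ U' j, F' i x = 0) :
    (∑ h ∈ Finset.range (d + 1), F' h ∘ₗ F h) ∘ₗ
      (∑ h ∈ Finset.range (d + 1), F h ∘ₗ F' h) = LinearMap.id ∧
    (∑ h ∈ Finset.range (d + 1), F h ∘ₗ F' h) ∘ₗ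
      (∑ h ∈ Finset.range (d + 1), F' h ∘ₗ F h) = LinearMap.id := by
  constructor
  · exact stmt3_aux d U' U hU'bot hUbot hU'top hUtop
      (fun i hi => (hpartial i hi).symm) F' F hF'id hF'zero hFid hFzero
  · exact stmt3_aux d U U' hUbot hU'bot hUtop hU'top hpartial
      F F' hFid hFzero hF'id hF'zero
end

section
/- The map Δ = Σ_{h=0}^d F_h' ∘ F_h satisfies Δ U_i = U_i' and (Δ − I) U_i ⊆ U_0 + U_1 + ... + U_{i−1} for 0 ≤ i ≤ d. Moreover, Δ is the unique linear map on V with these two properties (for the uniqueness, it suffices that Δ' U_i ⊆ U_i' and (Δ' − I) U_i ⊆ U_0 + ... + U_{i−1} for all i imply Δ' = Δ). -/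
theorem stmt4 {K V : Type*} [Field K] [AddCommGroup V] [Module K V]
    [FiniteDimensional K V] (d : ℕ)
    (U U' : ℕ → Submodule K V)
    (hUbot : ∀ i, d < i → U i = ⊥) (hU'bot : ∀ i, d < i → U' i = ⊥)
    (hUtop : iSup U = ⊤) (hU'top : iSup U' = ⊤)
    (hUind : iSupIndep U)
    (hU'ind : iSupIndep U')
    (hpartial : ∀ i ≤ d,
      (⨆ h ∈ Finset.Iic i, U h) = (⨆ h ∈ Finset.Iic i, U' h))
    (F F' : ℕ → V →ₗ[K] V)
    (hFid : ∀ i, ∀ x ∈ U i, F i x = x)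
    (hFzero : ∀ i j, i ≠ j → ∀ x ∈ U j, F i x = 0)
    (hF'id : ∀ i, ∀ x ∈ U' i, F' i x = x)
    (hF'zero : ∀ i j, i ≠ j → ∀ x ∈ U' j, F' i x = 0) :
    (∀ i ≤ d, Submodule.map (∑ h ∈ Finset.range (d + 1), F' h ∘ₗ F h) (U i) = U' i) ∧
    (∀ i ≤ d, ∀ x ∈ U i,
      (∑ h ∈ Finset.range (d + 1), F' h ∘ₗ F h) x - x ∈ ⨆ h ∈ Finset.Iio i, U h) ∧
    (∀ D : V →ₗ[K] V,
      (∀ i ≤ d, Submodule.map D (U i) ≤ U' i) →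
      (∀ i ≤ d, ∀ x ∈ U i, D x - x ∈ ⨆ h ∈ Finset.Iio i, U h) →
      D = ∑ h ∈ Finset.range (d + 1), F' h ∘ₗ F h) := by
  set Δ : V →ₗ[K] V := ∑ h ∈ Finset.range (d + 1), F' h ∘ₗ F h with hΔ
  -- F' i maps everything into U' i
  have hF'range : ∀ i, ∀ x : V, F' i x ∈ U' i := by
    intro i x
    have hle : iSup U' ≤ (U' i).comap (F' i) := by
      refine iSup_le fun j y hy => ?_
      simp only [Submodule.mem_comap]
      by_cases hij : i = j
      · subst hij; rw [hF'id i y hy]; exact hy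
      · rw [hF'zero i j hij y hy]; exact (U' i).zero_mem
    have hx : x ∈ iSup U' := by rw [hU'top]; trivial
    exact hle hx
  have hΔeq : ∀ i ≤ d, ∀ x ∈ U i, Δ x = F' i x := by
    intro i hi x hx
    rw [hΔ, LinearMap.sum_apply,
      Finset.sum_eq_single_of_mem i (Finset.mem_range.mpr (Nat.lt_succ_of_le hi))]
    · simp [hFid i x hx]
    · intro h _ hne
      simp [hFzero h i hne x hx]
  have hIio : ∀ i ≤ d, (⨆ h ∈ Finset.Iio i, U' h) = ⨆ h ∈ Finset.Iio i, U h := by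
    intro i hi
    cases i with
    | zero => simp
    | succ j =>
        have hIic : Finset.Iio (j + 1) = Finset.Iic j := by
          ext; simp [Nat.lt_succ_iff]
        rw [hIic]
        exact (hpartial j (le_of_lt (Nat.lt_of_succ_le hi))).symm
  have hsub : ∀ i ≤ d, ∀ x ∈ U i, x - F' i x ∈ ⨆ h ∈ Finset.Iio i, U h := by
    intro i hi x hx
    rw [← hIio i hi]
    have hx' : x ∈ ⨆ h ∈ Finset.Iic i, U' h := by
      rw [← hpartial i hi]
      exact Submodule.mem_iSup_of_mem i (Submodule.mem_iSup_of_mem (Finset.mem_Iic.mpr le_rfl) hx)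
    have hle : (⨆ h ∈ Finset.Iic i, U' h) ≤
        (⨆ h ∈ Finset.Iio i, U' h).comap (LinearMap.id - F' i) := by
      refine iSup₂_le fun j hj y hy => ?_
      simp only [Submodule.mem_comap, LinearMap.sub_apply, LinearMap.id_apply]
      rcases eq_or_lt_of_le (Finset.mem_Iic.mp hj) with hji | hji
      · subst hji; rw [hF'id j y hy]; simp
      · rw [hF'zero i j (Nat.ne_of_gt hji) y hy, sub_zero]
        exact Submodule.mem_iSup_of_mem j (Submodule.mem_iSup_of_mem (Finset.mem_Iio.mpr hji) hy)
    simpa using hle hx'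
  have hker : ∀ i ≤ d, (⨆ h ∈ Finset.Iio i, U' h) ≤ LinearMap.ker (F' i) := by
    intro i hi
    refine iSup₂_le fun k hk w hw => ?_
    exact LinearMap.mem_ker.mpr (hF'zero i k (Nat.ne_of_gt (Finset.mem_Iio.mp hk)) w hw)
  have hsurj : ∀ i ≤ d, ∀ y ∈ U' i, ∃ x ∈ U i, F' i x = y := by
    intro i hi y hy
    have hy' : y ∈ ⨆ h ∈ Finset.Iic i, U h := by
      rw [hpartial i hi]
      exact Submodule.mem_iSup_of_mem i (Submodule.mem_iSup_of_mem (Finset.mem_Iic.mpr le_rfl) hy)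
    have key : (⨆ h ∈ Finset.Iic i, U h) ≤ ((U i).map (F' i)).comap (F' i) := by
      refine iSup₂_le fun j hj z hz => ?_
      simp only [Submodule.mem_comap]
      rcases eq_or_lt_of_le (Finset.mem_Iic.mp hj) with hji | hji
      · subst hji; exact Submodule.mem_map_of_mem hz
      · have hz' : z ∈ ⨆ h ∈ Finset.Iio i, U' h := by
          rw [hIio i hi]
          exact Submodule.mem_iSup_of_mem j (Submodule.mem_iSup_of_mem (Finset.mem_Iio.mpr hji) hz)
        rw [LinearMap.mem_ker.mp (hker i hi hz')]
        exact Submodule.zero_mem _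
    have hmem := key hy'
    rw [Submodule.mem_comap, hF'id i y hy] at hmem
    obtain ⟨x, hx, hfx⟩ := hmem
    exact ⟨x, hx, hfx⟩
  have hDelta2 : ∀ i ≤ d, ∀ x ∈ U i, Δ x - x ∈ ⨆ h ∈ Finset.Iio i, U h := by
    intro i hi x hx
    rw [hΔeq i hi x hx]
    simpa [neg_sub] using Submodule.neg_mem _ (hsub i hi x hx)
  refine ⟨?_, hDelta2, ?_⟩
  · intro i hi
    refine le_antisymm ?_ ?_
    · rintro _ ⟨x, hx, rfl⟩
      rw [hΔeq i hi x hx]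
      exact hF'range i x
    · intro y hy
      obtain ⟨x, hx, hfx⟩ := hsurj i hi y hy
      exact ⟨x, hx, by rw [hΔeq i hi x hx, hfx]⟩
  · intro D hD1 hD2
    have hle : iSup U ≤ LinearMap.ker (D - Δ) := by
      refine iSup_le fun i x hx => ?_
      rcases le_or_gt i d with hi | hi
      · rw [LinearMap.mem_ker, LinearMap.sub_apply, sub_eq_zero]
        have h1 : D x - Δ x ∈ U' i := by
          refine Submodule.sub_mem _ (hD1 i hi ⟨x, hx, rfl⟩) ?_
          rw [hΔeq i hi x hx]; exact hF'range i x
        have h2 : D x - Δ x ∈ ⨆ h ∈ Finset.Iio i, U' h := by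
          have hc : D x - Δ x ∈ ⨆ h ∈ Finset.Iio i, U h := by
            have := Submodule.sub_mem _ (hD2 i hi x hx) (hDelta2 i hi x hx)
            simpa using this
          rwa [hIio i hi]
        have h3 : (⨆ h ∈ Finset.Iio i, U' h) ≤ ⨆ j, ⨆ (_ : j ≠ i), U' j :=
          iSup₂_le fun j hj => le_iSup₂_of_le j (Nat.ne_of_lt (Finset.mem_Iio.mp hj)) le_rfl
        exact sub_eq_zero.mp (Submodule.disjoint_def.mp (hU'ind i) _ h1 (h3 h2))
      · rw [hUbot i hi] at hx
        simp only [Submodule.mem_bot] at hx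
        subst hx
        simp
    ext x
    have hx : x ∈ iSup U := by rw [hUtop]; trivial
    have := hle hx
    rw [LinearMap.mem_ker, LinearMap.sub_apply, sub_eq_zero] at this
    exact this
end

section
/- For 0 ≤ i, j ≤ d+1, ϑ_i − ϑ_j = (q^j − q^i)(1 − q^{d−i−j+1}) / ((1 − q)(1 − q^d)). -/
theorem stmt10 {K : Type*} [Field K] (d : ℕ) (hd : 1 ≤ d) (q α1 α2 α3 : K)
    (hq0 : q ≠ 0) (hq : ∀ k, 1 ≤ k → k ≤ d → q ^ k ≠ 1)
    (θ : ℕ → K) (hθ : ∀ i ≤ d, θ i = α1 + α2 * q ^ i + α3 * q⁻¹ ^ i)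
    (hdist : ∀ i ≤ d, ∀ j ≤ d, θ i = θ j → i = j)
    (ϑ : ℕ → K)
    (hϑ : ∀ i ≤ d + 1, ϑ i = ∑ h ∈ Finset.range i, (θ h - θ (d - h)) / (θ 0 - θ d)) :
    ∀ i ≤ d + 1, ∀ j ≤ d + 1,
      ϑ i - ϑ j = (q ^ j - q ^ i) * (1 - q ^ ((d : ℤ) - i - j + 1)) /
        ((1 - q) * (1 - q ^ d)) := by
  have hq1 : (1 : K) - q ≠ 0 := by
    intro h
    exact hq 1 le_rfl hd (by rw [pow_one]; exact (sub_eq_zero.mp h).symm)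
  have hqd : (1 : K) - q ^ d ≠ 0 := by
    intro h
    exact hq d hd le_rfl (sub_eq_zero.mp h).symm
  have hθ0d : θ 0 - θ d ≠ 0 := by
    intro h
    have := hdist 0 (Nat.zero_le _) d le_rfl (sub_eq_zero.mp h)
    omega
  -- the constant c = α2 - α3 * q⁻¹^d
  have hfac : ∀ h ≤ d, θ h - θ (d - h)
      = (α2 - α3 * q⁻¹ ^ d) * (q ^ h - q ^ (d - h)) := by
    intro h hh
    rw [hθ h hh, hθ (d - h) (Nat.sub_le _ _)]
    have h1 : q ^ h * q ^ (d - h) = q ^ d := by rw [← pow_add]; congr 1; omega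
    have h2 : q⁻¹ ^ h * q⁻¹ ^ (d - h) = q⁻¹ ^ d := by rw [← pow_add]; congr 1; omega
    have h3 : q⁻¹ ^ h * q ^ h = 1 := by
      rw [← mul_pow, inv_mul_cancel₀ hq0, one_pow]
    have h4 : q⁻¹ ^ (d - h) * q ^ (d - h) = 1 := by
      rw [← mul_pow, inv_mul_cancel₀ hq0, one_pow]
    -- q⁻¹^h = q⁻¹^d * q^(d-h), q⁻¹^(d-h) = q⁻¹^d * q^h
    have e1 : q⁻¹ ^ h = q⁻¹ ^ d * q ^ (d - h) := by
      rw [← h2, mul_assoc, h4, mul_one]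
    have e2 : q⁻¹ ^ (d - h) = q⁻¹ ^ d * q ^ h := by
      rw [← h2, mul_comm (q⁻¹ ^ h), mul_assoc, h3, mul_one]
    rw [e1, e2]; ring
  have hθ0dval : θ 0 - θ d = (α2 - α3 * q⁻¹ ^ d) * (1 - q ^ d) := by
    have := hfac 0 (Nat.zero_le _)
    rwa [Nat.sub_zero, pow_zero] at this
  have hc0 : (α2 - α3 * q⁻¹ ^ d) ≠ 0 := by
    intro h
    exact hθ0d (by rw [hθ0dval, h, zero_mul])
  have hratio : ∀ h ≤ d, (θ h - θ (d - h)) / (θ 0 - θ d)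
      = (q ^ h - q ^ (d - h)) / (1 - q ^ d) := by
    intro h hh
    rw [hfac h hh, hθ0dval, mul_div_mul_left _ _ hc0]
  -- closed form for the partial sums
  have hsum : ∀ i ≤ d + 1, ∑ h ∈ Finset.range i, (q ^ h - q ^ (d - h))
      = (1 - q ^ i) * (1 - q ^ ((d : ℤ) - i + 1)) / (1 - q) := by
    intro i hi
    induction i with
    | zero => simp
    | succ n ih =>
      have hn : n ≤ d := by omega
      rw [Finset.sum_range_succ, ih (by omega)]
      have hdn : q ^ (d - n) = q ^ ((d : ℤ) - n) := by
        rw [← zpow_natCast]; congr 1; omega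
      have e1 : q ^ ((d : ℤ) - n + 1) = q ^ ((d : ℤ) - n) * q := by
        rw [zpow_add_one₀ hq0]
      have e2 : ((d : ℤ) - (n + 1 : ℕ) + 1) = (d : ℤ) - n := by push_cast; ring
      rw [hdn, e1, e2]
      set t := q ^ ((d : ℤ) - n) with ht
      field_simp
      ring
  intro i hi j hj
  rw [hϑ i hi, hϑ j hj,
    Finset.sum_congr rfl (fun h hh => hratio h (by simp at hh; omega)),
    Finset.sum_congr rfl (fun h hh => hratio h (by simp at hh; omega)),
    ← Finset.sum_div, ← Finset.sum_div, hsum i hi, hsum j hj]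
  have eB1 : q ^ ((d : ℤ) - i + 1) = q ^ ((d : ℤ) - i - j + 1) * q ^ j := by
    rw [← zpow_natCast q j, ← zpow_add₀ hq0]; congr 1; ring
  have eB2 : q ^ ((d : ℤ) - j + 1) = q ^ ((d : ℤ) - i - j + 1) * q ^ i := by
    rw [← zpow_natCast q i, ← zpow_add₀ hq0]; congr 1; ring
  rw [eB1, eB2]
  set t := q ^ ((d : ℤ) - i - j + 1) with ht
  field_simp
  ring
end

section
/- For 1 ≤ i ≤ d/2, the subspace U_i decomposes as the direct sum U_i = K_i ⊕ R(U_{i−1}), where K_i = U_i ∩ ker(R^{d−2i+1}). -/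
theorem stmt16 {K V : Type*} [Field K] [AddCommGroup V] [Module K V]
    [FiniteDimensional K V] (d : ℕ)
    (U : ℕ → Submodule K V)
    (hUbot : ∀ i, d < i → U i = ⊥)
    (hUtop : iSup U = ⊤)
    (hUind : iSupIndep U)
    (R : Module.End K V)
    (hR : ∀ i < d, Submodule.map R (U i) ≤ U (i + 1))
    (hRd : Submodule.map R (U d) = ⊥)
    (hinj : ∀ i j, i ≤ j → j ≤ d → i + j ≤ d →
      ∀ x ∈ U i, (R ^ (j - i)) x = 0 → x = 0)
    (hsurj : ∀ i j, i ≤ j → j ≤ d → d ≤ i + j →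
      ∀ y ∈ U j, ∃ x ∈ U i, (R ^ (j - i)) x = y)
    (Kk : ℕ → Submodule K V)
    (hK : ∀ i, 2 * i ≤ d → Kk i = U i ⊓ LinearMap.ker (R ^ (d - 2 * i + 1))) :
    ∀ i, 1 ≤ i → 2 * i ≤ d →
      U i = Kk i ⊔ Submodule.map R (U (i - 1)) ∧
      Kk i ⊓ Submodule.map R (U (i - 1)) = ⊥ := by
  -- powers of R move U a into U (a+k)
  have hpow : ∀ k a, a + k ≤ d → ∀ x ∈ U a, (R ^ k) x ∈ U (a + k) := by
    intro k
    induction k with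
    | zero => intro a _ x hx; simpa using hx
    | succ k ih =>
      intro a h x hx
      have h1 : R x ∈ U (a + 1) := hR a (by omega) ⟨x, hx, rfl⟩
      have h2 := ih (a + 1) (by omega) (R x) h1
      have : (R ^ (k + 1)) x = (R ^ k) (R x) := by
        rw [pow_succ]; rfl
      rw [this]
      convert h2 using 2
      omega
  intro i h1 h2
  set m := d - 2 * i + 1 with hm
  have hKi := hK i h2
  have him : i + m = d - i + 1 := by omega
  have hKU : Kk i ≤ U i := by rw [hKi]; exact inf_le_left
  have hRU : Submodule.map R (U (i - 1)) ≤ U i := by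
    have := hR (i - 1) (by omega)
    have hi : i - 1 + 1 = i := by omega
    rwa [hi] at this
  constructor
  · apply le_antisymm
    · intro x hx
      -- y := R^m x ∈ U (i+m)
      have hy : (R ^ m) x ∈ U (i + m) := hpow m i (by omega) x hx
      obtain ⟨z, hz, hzeq⟩ := hsurj (i - 1) (i + m) (by omega) (by omega) (by omega)
        ((R ^ m) x) hy
      have hsub : i + m - (i - 1) = m + 1 := by omega
      rw [hsub] at hzeq
      have hRz : R z ∈ Submodule.map R (U (i - 1)) := ⟨z, hz, rfl⟩
      have hxK : x - R z ∈ Kk i := by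
        rw [hKi]
        refine ⟨Submodule.sub_mem _ hx (hRU hRz), ?_⟩
        have : (R ^ (m + 1)) z = (R ^ m) (R z) := by rw [pow_succ]; rfl
        have goal : (R ^ m) (x - R z) = 0 := by
          rw [map_sub, ← this, hzeq, sub_self]
        exact goal
      have : x = (x - R z) + R z := by abel
      rw [this]
      exact Submodule.add_mem _ (Submodule.mem_sup_left hxK) (Submodule.mem_sup_right hRz)
    · exact sup_le hKU hRU
  · rw [eq_bot_iff]
    rintro x ⟨hxK, z, hz, rfl⟩
    have hker : (R ^ m) (R z) = 0 := by
      rw [hKi] at hxK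
      exact hxK.2
    have hz0 : z = 0 := by
      apply hinj (i - 1) (i + m) (by omega) (by omega) (by omega) z hz
      have hsub : i + m - (i - 1) = m + 1 := by omega
      rw [hsub, pow_succ]
      exact hker
    simp [hz0]
end

section
/- The dimension of U_i is nondecreasing in i for 0 ≤ i ≤ d/2 and nonincreasing in i for d/2 ≤ i ≤ d; that is, dim U_i ≤ dim U_{i+1} for 0 ≤ i < d/2 and dim U_i ≥ dim U_{i+1} for d/2 ≤ i ≤ d−1. -/
theorem stmt17 {K V : Type*} [Field K] [AddCommGroup V] [Module K V]
    [FiniteDimensional K V] (d : ℕ)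
    (U : ℕ → Submodule K V)
    (hUbot : ∀ i, d < i → U i = ⊥)
    (hUtop : iSup U = ⊤)
    (hUind : iSupIndep U)
    (R : Module.End K V)
    (hR : ∀ i < d, Submodule.map R (U i) ≤ U (i + 1))
    (hRd : Submodule.map R (U d) = ⊥)
    (hinj : ∀ i j, i ≤ j → j ≤ d → i + j ≤ d →
      ∀ x ∈ U i, (R ^ (j - i)) x = 0 → x = 0)
    (hsurj : ∀ i j, i ≤ j → j ≤ d → d ≤ i + j →
      ∀ y ∈ U j, ∃ x ∈ U i, (R ^ (j - i)) x = y) :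
    (∀ i, 2 * i < d → Module.finrank K (U i) ≤ Module.finrank K (U (i + 1))) ∧
    (∀ i, d ≤ 2 * i → i + 1 ≤ d →
      Module.finrank K (U (i + 1)) ≤ Module.finrank K (U i)) := by
  constructor
  · intro i hi
    have hid : i < d := by omega
    have hmap : ∀ x ∈ U i, R x ∈ U (i + 1) := fun x hx =>
      hR i hid ⟨x, hx, rfl⟩
    let f : U i →ₗ[K] U (i + 1) := R.restrict hmap
    have hf : Function.Injective f := by
      intro x y hxy
      have h := hinj i (i + 1) (by omega) (by omega) (by omega)
        ((x : V) - y) (sub_mem x.2 y.2)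
      have : ((x : V) - y) = 0 := by
        apply h
        have : (f x : V) = f y := by rw [hxy]
        simp only [f, LinearMap.restrict_apply] at this
        simp [pow_one, map_sub, this]
      exact Subtype.ext (sub_eq_zero.mp this)
    exact LinearMap.finrank_le_finrank_of_injective hf
  · intro i hi hi1
    have hid : i < d := by omega
    have hmap : ∀ x ∈ U i, R x ∈ U (i + 1) := fun x hx =>
      hR i hid ⟨x, hx, rfl⟩
    let f : U i →ₗ[K] U (i + 1) := R.restrict hmap
    have hf : Function.Surjective f := by
      intro y
      obtain ⟨x, hx, hxy⟩ := hsurj i (i + 1) (by omega) (by omega) (by omega)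
        (y : V) y.2
      refine ⟨⟨x, hx⟩, ?_⟩
      ext
      simp only [f, LinearMap.restrict_apply]
      simpa [pow_one] using hxy
    calc Module.finrank K (U (i + 1)) = Module.finrank K (LinearMap.range f) := by
          rw [LinearMap.range_eq_top.mpr hf, finrank_top]
      _ ≤ Module.finrank K (U i) := LinearMap.finrank_range_le f
end

section
/- Let M denote the commutative subalgebra of End(V) generated by A. Fix 0 ≤ i ≤ d/2 and a nonzero subspace W of V such that E_hW = 0 for 0 ≤ h ≤ i−1 and for d−i+1 ≤ h ≤ d, and such that τ_{i,d−i}(A) restricted to W is injective. Then the M-submodule MW generated by W satisfies MW = W + τ_{i,i+1}(A)W + ... + τ_{i,d−i}(A)W, and the minimal polynomial of the action of A on MW is τ_{i,d−i+1}(x) = (x−θ_i)(x−θ_{i+1})···(x−θ_{d−i}). -/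
open Polynomial

section StmtAux
variable {K V : Type*} [Field K] [AddCommGroup V] [Module K V]
  (d : ℕ) (A : Module.End K V) (θ : ℕ → K) (E : ℕ → Module.End K V)

lemma stmt19.pow_eq (hE1 : ∀ i ≤ d, ∀ j ≤ d, E i * E j = if i = j then E i else 0)
    (hE2 : ∑ i ∈ Finset.range (d + 1), E i = 1)
    (hE3 : A = ∑ i ∈ Finset.range (d + 1), θ i • E i) (n : ℕ) :
    A ^ n = ∑ h ∈ Finset.range (d + 1), θ h ^ n • E h := by
  induction n with
  | zero => simpa using hE2.symm
  | succ n ih =>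
    rw [pow_succ, ih, hE3, Finset.sum_mul_sum]
    refine Finset.sum_congr rfl (fun h hh => ?_)
    have hhd : h ≤ d := by simpa [Nat.lt_succ_iff] using hh
    have : ∀ k ∈ Finset.range (d + 1),
        θ h ^ n • E h * θ k • E k = if h = k then (θ h ^ (n+1)) • E h else 0 := by
      intro k hk
      have hkd : k ≤ d := by simpa [Nat.lt_succ_iff] using hk
      rw [smul_mul_assoc, mul_smul_comm, hE1 h hhd k hkd]
      by_cases hhk : h = k
      · subst hhk; simp [smul_smul, pow_succ]
      · simp [hhk]
    rw [Finset.sum_congr rfl this, Finset.sum_ite_eq (Finset.range (d+1)) h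
      (fun _ => (θ h ^ (n+1)) • E h)]
    simp [hh]

lemma stmt19.aeval_eq (hE1 : ∀ i ≤ d, ∀ j ≤ d, E i * E j = if i = j then E i else 0)
    (hE2 : ∑ i ∈ Finset.range (d + 1), E i = 1)
    (hE3 : A = ∑ i ∈ Finset.range (d + 1), θ i • E i) (p : Polynomial K) :
    aeval A p = ∑ h ∈ Finset.range (d + 1), (p.eval (θ h)) • E h := by
  induction p using Polynomial.induction_on' with
  | add p q hp hq =>
    simp [map_add, hp, hq, add_smul, Finset.sum_add_distrib]
  | monomial n a =>
    rw [aeval_monomial]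
    simp only [eval_monomial]
    rw [stmt19.pow_eq d A θ E hE1 hE2 hE3 n, Finset.mul_sum]
    refine Finset.sum_congr rfl (fun h hh => ?_)
    rw [mul_smul_comm, Algebra.algebraMap_eq_smul_one, smul_mul_assoc, one_mul,
      smul_comm, smul_smul]

end StmtAux

/-- The polynomial τ_{ij}(x) = (x - θ_i)(x - θ_{i+1})···(x - θ_{j-1}). -/
noncomputable def tauPoly {K : Type*} [Field K] (θ : ℕ → K) (i j : ℕ) :
    Polynomial K :=
  ∏ h ∈ Finset.Ico i j, (X - C (θ h))

section TauAux
variable {K : Type*} [Field K] (θ : ℕ → K)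

lemma stmt19.tau_monic (i j : ℕ) : (tauPoly θ i j).Monic :=
  monic_prod_of_monic _ _ fun _ _ => monic_X_sub_C _

lemma stmt19.tau_natDegree (i j : ℕ) : (tauPoly θ i j).natDegree = j - i := by
  rw [tauPoly, natDegree_prod _ _ (fun h _ => X_sub_C_ne_zero _)]
  simp [natDegree_X_sub_C]

lemma stmt19.tau_eval_zero {i j h : ℕ} (hh : h ∈ Finset.Ico i j) :
    (tauPoly θ i j).eval (θ h) = 0 := by
  rw [tauPoly, eval_prod]
  exact Finset.prod_eq_zero hh (by simp)

lemma stmt19.tau_mul {i j k : ℕ} (hij : i ≤ j) (hjk : j ≤ k) :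
    tauPoly θ i j * tauPoly θ j k = tauPoly θ i k :=
  Finset.prod_Ico_consecutive _ hij hjk

end TauAux

theorem stmt19 {K V : Type*} [Field K] [AddCommGroup V] [Module K V]
    [FiniteDimensional K V] (d : ℕ) (A : Module.End K V) (θ : ℕ → K)
    (hdist : ∀ i ≤ d, ∀ j ≤ d, θ i = θ j → i = j)
    (E : ℕ → Module.End K V)
    (hE1 : ∀ i ≤ d, ∀ j ≤ d, E i * E j = if i = j then E i else 0)
    (hE2 : ∑ i ∈ Finset.range (d + 1), E i = 1)
    (hE3 : A = ∑ i ∈ Finset.range (d + 1), θ i • E i)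
    (heig : ∀ i ≤ d, E i ≠ 0)
    (i : ℕ) (hi : 2 * i ≤ d)
    (W : Submodule K V) (hW0 : W ≠ ⊥)
    (hWE : ∀ h ≤ d, (h < i ∨ d - i < h) → Submodule.map (E h) W = ⊥)
    (hWinj : ∀ w ∈ W, (Polynomial.aeval A (tauPoly θ i (d - i))) w = 0 → w = 0)
    (hdirect : iSupIndep (fun j : {j : ℕ // i ≤ j ∧ j ≤ d - i} =>
      Submodule.map (Polynomial.aeval A (tauPoly θ i j)) W)) :
    (⨆ n : ℕ, Submodule.map (A ^ n) W) =
      (⨆ j ∈ Finset.Icc i (d - i),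
        Submodule.map (Polynomial.aeval A (tauPoly θ i j)) W) ∧
    (∀ w ∈ (⨆ n : ℕ, Submodule.map (A ^ n) W),
      (Polynomial.aeval A (tauPoly θ i (d - i + 1))) w = 0) ∧
    (∀ p : Polynomial K,
      (∀ w ∈ (⨆ n : ℕ, Submodule.map (A ^ n) W),
        (Polynomial.aeval A p) w = 0) →
      tauPoly θ i (d - i + 1) ∣ p) := by
  classical
  set MW : Submodule K V := ⨆ n : ℕ, Submodule.map (A ^ n) W with hMWdef
  set S : Submodule K V := ⨆ j ∈ Finset.Icc i (d - i),
      Submodule.map (Polynomial.aeval A (tauPoly θ i j)) W with hSdef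
  have haev := stmt19.aeval_eq d A θ E hE1 hE2 hE3
  have hpow := stmt19.pow_eq d A θ E hE1 hE2 hE3
  -- E kills W outside [i, d-i]
  have hEW : ∀ h ≤ d, (h < i ∨ d - i < h) → ∀ w ∈ W, E h w = 0 := by
    intro h hhd hcase w hw
    have h1 : E h w ∈ Submodule.map (E h) W := Submodule.mem_map_of_mem hw
    rw [hWE h hhd hcase] at h1
    simpa using h1
  have hIccsub : Finset.Icc i (d - i) ⊆ Finset.range (d + 1) := by
    intro h hh
    simp only [Finset.mem_Icc] at hh
    exact Finset.mem_range.mpr (by omega)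
  -- aeval on W
  have haevW : ∀ (p : Polynomial K), ∀ w ∈ W,
      aeval A p w = ∑ h ∈ Finset.Icc i (d - i), (p.eval (θ h)) • E h w := by
    intro p w hw
    rw [haev p, LinearMap.sum_apply]
    refine (Finset.sum_subset hIccsub ?_).symm.trans ?_
    · intro h hh hnot
      have hhd : h ≤ d := by simpa [Nat.lt_succ_iff] using hh
      simp only [Finset.mem_Icc, not_and_or, not_le] at hnot
      rw [LinearMap.smul_apply, hEW h hhd (by omega) w hw, smul_zero]
    · exact Finset.sum_congr rfl fun h _ => rfl
  -- τ_{i,d-i+1} kills W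
  have hkillW : ∀ w ∈ W, aeval A (tauPoly θ i (d - i + 1)) w = 0 := by
    intro w hw
    rw [haevW _ w hw]
    refine Finset.sum_eq_zero fun h hh => ?_
    obtain ⟨h1, h2⟩ := Finset.mem_Icc.mp hh
    rw [stmt19.tau_eval_zero θ (Finset.mem_Ico.mpr ⟨h1, by omega⟩), zero_smul]
  -- W ≤ MW
  have hWMW : W ≤ MW := by
    have h0 : Submodule.map (A ^ 0) W = W := by
      rw [pow_zero, Module.End.one_eq_id, Submodule.map_id]
    calc W = Submodule.map (A ^ 0) W := h0.symm
    _ ≤ MW := le_iSup (fun n => Submodule.map (A ^ n) W) 0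
  -- all aeval images of W lie in MW
  have hMWmem : ∀ (p : Polynomial K), ∀ w ∈ W, aeval A p w ∈ MW := by
    intro p w hw
    rw [Polynomial.aeval_eq_sum_range, LinearMap.sum_apply]
    refine Submodule.sum_mem _ fun k _ => ?_
    rw [LinearMap.smul_apply]
    exact Submodule.smul_mem _ _
      (le_iSup (fun n => Submodule.map (A ^ n) W) k (Submodule.mem_map_of_mem hw))
  -- span lemma
  have hspan : ∀ m : ℕ, ∀ p : Polynomial K, p.natDegree ≤ m → p.natDegree ≤ d - 2*i →
      ∀ w ∈ W, aeval A p w ∈ S := by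
    intro m
    induction m using Nat.strong_induction_on with
    | _ m ih =>
      intro p hpm hpd w hw
      by_cases hp0 : p = 0
      · rw [hp0]; simp
      have hc0 : p.leadingCoeff ≠ 0 := leadingCoeff_ne_zero.mpr hp0
      set c := p.leadingCoeff with hcdef
      set j := i + p.natDegree with hjdef
      have hjIcc : j ∈ Finset.Icc i (d - i) := Finset.mem_Icc.mpr ⟨by omega, by omega⟩
      have hτS : c • (aeval A (tauPoly θ i j) w) ∈ S := by
        refine Submodule.smul_mem _ _ ?_
        exact le_iSup₂ (f := fun j (_ : j ∈ Finset.Icc i (d - i)) =>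
          Submodule.map (Polynomial.aeval A (tauPoly θ i j)) W) j hjIcc
          (Submodule.mem_map_of_mem hw)
      set q := p - c • tauPoly θ i j with hqdef
      have hpq : aeval A p w = c • (aeval A (tauPoly θ i j) w) + aeval A q w := by
        have hps : p = c • tauPoly θ i j + q := by rw [hqdef]; abel
        conv_lhs => rw [hps]
        rw [map_add, map_smul, LinearMap.add_apply, LinearMap.smul_apply]
      by_cases hq0 : q = 0
      · rw [hpq, hq0]; simpa using hτS
      · have hτdeg : (c • tauPoly θ i j).degree = p.degree := by
          rw [Polynomial.smul_eq_C_mul, degree_C_mul hc0,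
            degree_eq_natDegree (stmt19.tau_monic θ i j).ne_zero,
            degree_eq_natDegree hp0, stmt19.tau_natDegree]
          norm_cast
          omega
        have hlead : p.leadingCoeff = (c • tauPoly θ i j).leadingCoeff := by
          rw [Polynomial.smul_eq_C_mul, leadingCoeff_mul, leadingCoeff_C,
            (stmt19.tau_monic θ i j).leadingCoeff, mul_one]
        have hdlt : q.degree < p.degree := degree_sub_lt hτdeg.symm hp0 hlead
        have hqlt : q.natDegree < p.natDegree := natDegree_lt_natDegree hq0 hdlt
        rw [hpq]
        exact Submodule.add_mem _ hτS
          (ih q.natDegree (lt_of_lt_of_le hqlt hpm) q le_rfl (by omega) w hw)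
  -- Part 1
  have part1 : MW = S := by
    refine le_antisymm (iSup_le fun n => ?_) (iSup₂_le fun j hj => ?_)
    · rintro v ⟨w, hw, rfl⟩
      have h1 : (A ^ n) w = aeval A ((X : Polynomial K) ^ n) w := by
        rw [aeval_X_pow]
      have h2 : aeval A ((X : Polynomial K) ^ n) w =
          aeval A ((X : Polynomial K) ^ n %ₘ tauPoly θ i (d - i + 1)) w := by
        conv_lhs => rw [← modByMonic_add_div ((X : Polynomial K) ^ n)
          (tauPoly θ i (d - i + 1))]
        rw [mul_comm, map_add, LinearMap.add_apply, map_mul, Module.End.mul_apply,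
          hkillW w hw, map_zero, add_zero]
      rw [h1, h2]
      set r := (X : Polynomial K) ^ n %ₘ tauPoly θ i (d - i + 1) with hrdef
      have hrd : r.natDegree ≤ d - 2 * i := by
        by_cases hr0 : r = 0
        · rw [hr0]; simp
        have hd1 := degree_modByMonic_lt ((X : Polynomial K) ^ n)
          (stmt19.tau_monic θ i (d - i + 1))
        rw [degree_eq_natDegree (stmt19.tau_monic θ i (d - i + 1)).ne_zero,
          stmt19.tau_natDegree, degree_eq_natDegree hr0] at hd1
        have : r.natDegree < d - i + 1 - i := by exact_mod_cast hd1
        omega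
      exact hspan r.natDegree r le_rfl hrd w hw
    · rintro v ⟨w, hw, rfl⟩
      exact hMWmem _ w hw
  -- Part 2
  have part2 : ∀ w ∈ MW, aeval A (tauPoly θ i (d - i + 1)) w = 0 := by
    have hle : MW ≤ LinearMap.ker (aeval A (tauPoly θ i (d - i + 1))) := by
      refine iSup_le fun n => ?_
      rintro v ⟨w, hw, rfl⟩
      simp only [LinearMap.mem_ker]
      have hc : aeval A (tauPoly θ i (d - i + 1)) * A ^ n
          = A ^ n * aeval A (tauPoly θ i (d - i + 1)) := by
        rw [show A ^ n = aeval A ((X : Polynomial K) ^ n) from (aeval_X_pow A).symm, ← map_mul, ← map_mul, mul_comm]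
      rw [← Module.End.mul_apply, hc, Module.End.mul_apply, hkillW w hw, map_zero]
    exact fun w hw => LinearMap.mem_ker.mp (hle hw)
  refine ⟨part1, part2, ?_⟩
  intro p hp
  -- injectivity of each τ_{ij}(A) on W
  have hinjW : ∀ j, i ≤ j → j ≤ d - i → ∀ w ∈ W,
      aeval A (tauPoly θ i j) w = 0 → w = 0 := by
    intro j hij hjd w hw h0
    apply hWinj w hw
    rw [← stmt19.tau_mul θ hij hjd, mul_comm, map_mul, Module.End.mul_apply, h0, map_zero]
  -- rank of each summand
  have hrankN : ∀ j ∈ Finset.Icc i (d - i),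
      Module.finrank K (Submodule.map (aeval A (tauPoly θ i j)) W) =
        Module.finrank K W := by
    intro j hj
    obtain ⟨hij, hjd⟩ := Finset.mem_Icc.mp hj
    set f := (aeval A (tauPoly θ i j)) ∘ₗ W.subtype with hfdef
    have hker : LinearMap.ker f = ⊥ := by
      rw [eq_bot_iff]
      rintro ⟨x, hx⟩ hxk
      have : aeval A (tauPoly θ i j) x = 0 := hxk
      have := hinjW j hij hjd x hx this
      simpa [Submodule.mk_eq_zero] using this
    have hrange : LinearMap.range f = Submodule.map (aeval A (tauPoly θ i j)) W := by
      rw [hfdef, LinearMap.range_comp, Submodule.range_subtype]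
    have h3 := LinearMap.finrank_range_add_finrank_ker f
    rw [hker, finrank_bot, add_zero, hrange] at h3
    exact h3
  -- rank of S
  have hkey : ∀ s : Finset ℕ, s ⊆ Finset.Icc i (d - i) →
      Module.finrank K (⨆ j ∈ s,
        Submodule.map (aeval A (tauPoly θ i j)) W : Submodule K V) =
      ∑ j ∈ s, Module.finrank K (Submodule.map (aeval A (tauPoly θ i j)) W) := by
    intro s
    induction s using Finset.induction_on with
    | empty => intro _; simp
    | @insert a s ha ih =>
      intro hsub
      have haIcc : a ∈ Finset.Icc i (d - i) := hsub (Finset.mem_insert_self a s)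
      obtain ⟨hai, had⟩ := Finset.mem_Icc.mp haIcc
      have hdisj : Disjoint (Submodule.map (aeval A (tauPoly θ i a)) W)
          (⨆ j ∈ s, Submodule.map (aeval A (tauPoly θ i j)) W) := by
        refine (hdirect ⟨a, hai, had⟩).mono_right ?_
        refine iSup₂_le fun j hj => ?_
        obtain ⟨hji, hjd⟩ := Finset.mem_Icc.mp (hsub (Finset.mem_insert_of_mem hj))
        have hne : (⟨j, hji, hjd⟩ : {j : ℕ // i ≤ j ∧ j ≤ d - i}) ≠ ⟨a, hai, had⟩ := by
          simp only [ne_eq, Subtype.mk.injEq]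
          exact fun hja => ha (hja ▸ hj)
        exact le_iSup₂ (f := fun (b : {j : ℕ // i ≤ j ∧ j ≤ d - i})
          (_ : b ≠ ⟨a, hai, had⟩) =>
          Submodule.map (aeval A (tauPoly θ i b)) W) ⟨j, hji, hjd⟩ hne
      rw [Finset.iSup_insert, Finset.sum_insert ha,
        ← ih (fun x hx => hsub (Finset.mem_insert_of_mem hx))]
      have h2 := Submodule.finrank_sup_add_finrank_inf_eq
        (Submodule.map (aeval A (tauPoly θ i a)) W)
        (⨆ j ∈ s, Submodule.map (aeval A (tauPoly θ i j)) W)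
      rw [hdisj.eq_bot, finrank_bot, add_zero] at h2
      exact h2
  have hSfr : Module.finrank K S =
      (Finset.Icc i (d - i)).card * Module.finrank K W := by
    rw [hSdef, hkey _ (subset_refl _), Finset.sum_congr rfl hrankN,
      Finset.sum_const, smul_eq_mul]
  -- E h kills MW for h outside
  have hEMW : ∀ h ≤ d, (h < i ∨ d - i < h) → ∀ v ∈ MW, E h v = 0 := by
    intro h hhd hcase
    have hle : MW ≤ LinearMap.ker (E h) := by
      refine iSup_le fun n => ?_
      rintro v ⟨w, hw, rfl⟩
      simp only [LinearMap.mem_ker]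
      have hmul : E h * A ^ n = θ h ^ n • E h := by
        rw [hpow n, Finset.mul_sum]
        have heach : ∀ k ∈ Finset.range (d + 1),
            E h * θ k ^ n • E k = if k = h then θ h ^ n • E h else 0 := by
          intro k hk
          have hkd : k ≤ d := by simpa [Nat.lt_succ_iff] using hk
          rw [mul_smul_comm, hE1 h hhd k hkd]
          by_cases hkh : k = h
          · subst hkh; simp
          · simp [hkh, Ne.symm hkh]
        rw [Finset.sum_congr rfl heach, Finset.sum_ite_eq' (Finset.range (d + 1)) h]
        simp [Nat.lt_succ_iff, hhd]
      rw [← Module.End.mul_apply, hmul, LinearMap.smul_apply, hEW h hhd hcase w hw,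
        smul_zero]
    exact fun v hv => LinearMap.mem_ker.mp (hle hv)
  -- map (E h) MW ≤ map (E h) W
  have hEhMW : ∀ h ≤ d, Submodule.map (E h) MW ≤ Submodule.map (E h) W := by
    intro h hhd
    rw [part1, hSdef, Submodule.map_iSup]
    refine iSup_le fun j => ?_
    rw [Submodule.map_iSup]
    refine iSup_le fun hj => ?_
    obtain ⟨hji, hjd⟩ := Finset.mem_Icc.mp hj
    rintro v ⟨x, ⟨w, hw, rfl⟩, rfl⟩
    have hmul : E h * aeval A (tauPoly θ i j)
        = (tauPoly θ i j).eval (θ h) • E h := by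
      rw [haev, Finset.mul_sum]
      have heach : ∀ k ∈ Finset.range (d + 1),
          E h * (tauPoly θ i j).eval (θ k) • E k =
            if k = h then (tauPoly θ i j).eval (θ h) • E h else 0 := by
        intro k hk
        have hkd : k ≤ d := by simpa [Nat.lt_succ_iff] using hk
        rw [mul_smul_comm, hE1 h hhd k hkd]
        by_cases hkh : k = h
        · subst hkh; simp
        · simp [hkh, Ne.symm hkh]
      rw [Finset.sum_congr rfl heach, Finset.sum_ite_eq' (Finset.range (d + 1)) h]
      simp [Nat.lt_succ_iff, hhd]
    rw [← Module.End.mul_apply, hmul, LinearMap.smul_apply]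
    exact Submodule.smul_mem _ _ (Submodule.mem_map_of_mem hw)
  -- MW inside the sum of E h images
  have hMWle : MW ≤ ⨆ h ∈ Finset.Icc i (d - i), Submodule.map (E h) W := by
    intro v hv
    have hv1 : v = ∑ h ∈ Finset.range (d + 1), E h v := by
      conv_lhs => rw [show v = (1 : Module.End K V) v from rfl, ← hE2]
      rw [LinearMap.sum_apply]
    have hv2 : v = ∑ h ∈ Finset.Icc i (d - i), E h v := by
      refine hv1.trans (Finset.sum_subset hIccsub ?_).symm
      intro h hh hnot
      have hhd : h ≤ d := by simpa [Nat.lt_succ_iff] using hh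
      simp only [Finset.mem_Icc, not_and_or, not_le] at hnot
      exact hEMW h hhd (by omega) v hv
    rw [hv2]
    refine Submodule.sum_mem _ fun h hh => ?_
    have hhd : h ≤ d := by
      obtain ⟨h1, h2⟩ := Finset.mem_Icc.mp hh; omega
    refine le_iSup₂ (f := fun h (_ : h ∈ Finset.Icc i (d - i)) =>
      Submodule.map (E h) W) h hh ?_
    exact hEhMW h hhd (Submodule.mem_map_of_mem hv)
  -- upper bound on rank
  have hkey2 : ∀ s : Finset ℕ,
      Module.finrank K (⨆ h ∈ s, Submodule.map (E h) W : Submodule K V) ≤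
      ∑ h ∈ s, Module.finrank K (Submodule.map (E h) W) := by
    intro s
    induction s using Finset.induction_on with
    | empty => simp
    | @insert a s ha ih =>
      rw [Finset.iSup_insert, Finset.sum_insert ha]
      exact le_trans (Submodule.finrank_add_le_finrank_add_finrank _ _)
        (Nat.add_le_add_left ih _)
  have hnW : 0 < Module.finrank K W := by
    haveI := Submodule.nontrivial_iff_ne_bot.mpr hW0
    exact Module.finrank_pos
  -- every E h W is nonzero on the middle range
  have hEhW : ∀ h ∈ Finset.Icc i (d - i), Submodule.map (E h) W ≠ ⊥ := by
    intro h0 hh0 hbot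
    have hcard : 0 < (Finset.Icc i (d - i)).card := Finset.card_pos.mpr ⟨h0, hh0⟩
    have hsum_le : ∑ h ∈ Finset.Icc i (d - i),
        Module.finrank K (Submodule.map (E h) W) ≤
        ((Finset.Icc i (d - i)).card - 1) * Module.finrank K W := by
      rw [← Finset.add_sum_erase _ _ hh0, hbot, finrank_bot, zero_add]
      calc ∑ h ∈ (Finset.Icc i (d - i)).erase h0,
            Module.finrank K (Submodule.map (E h) W)
          ≤ ((Finset.Icc i (d - i)).erase h0).card • Module.finrank K W :=
            Finset.sum_le_card_nsmul _ _ _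
              (fun x _ => Submodule.finrank_map_le _ _)
        _ = ((Finset.Icc i (d - i)).card - 1) * Module.finrank K W := by
            rw [Finset.card_erase_of_mem hh0, smul_eq_mul]
    have hge : (Finset.Icc i (d - i)).card * Module.finrank K W ≤
        ∑ h ∈ Finset.Icc i (d - i), Module.finrank K (Submodule.map (E h) W) := by
      rw [← hSfr, ← part1]
      exact le_trans (Submodule.finrank_mono hMWle) (hkey2 _)
    have hlt : ((Finset.Icc i (d - i)).card - 1) * Module.finrank K W <
        (Finset.Icc i (d - i)).card * Module.finrank K W :=
      (Nat.mul_lt_mul_right hnW).mpr (by omega)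
    omega
  -- every θ h for h in the middle range is a root of p
  have hroot : ∀ h ∈ Finset.Icc i (d - i), p.eval (θ h) = 0 := by
    intro h hh
    obtain ⟨hhi, hhd'⟩ := Finset.mem_Icc.mp hh
    have hhd : h ≤ d := by omega
    obtain ⟨x, hxmem, hx0⟩ := Submodule.ne_bot_iff _ |>.mp (hEhW h hh)
    obtain ⟨w, hw, rfl⟩ := hxmem
    have h0 : aeval A p w = 0 := hp w (hWMW hw)
    have h1 : E h (aeval A p w) = p.eval (θ h) • E h w := by
      rw [haevW p w hw, map_sum]
      have heach : ∀ k ∈ Finset.Icc i (d - i),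
          E h (p.eval (θ k) • E k w) =
            if k = h then p.eval (θ h) • E h w else 0 := by
        intro k hk
        obtain ⟨hk1, hk2⟩ := Finset.mem_Icc.mp hk
        have hkd : k ≤ d := by omega
        rw [map_smul, ← Module.End.mul_apply, hE1 h hhd k hkd]
        by_cases hkh : k = h
        · subst hkh; simp
        · simp [hkh, Ne.symm hkh]
      rw [Finset.sum_congr rfl heach, Finset.sum_ite_eq' (Finset.Icc i (d - i)) h]
      simp [hh]
    rw [h0, map_zero] at h1
    rcases smul_eq_zero.mp h1.symm with hc | hc
    · exact hc
    · exact absurd hc hx0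
  -- conclude divisibility
  show (∏ h ∈ Finset.Ico i (d - i + 1), (X - C (θ h))) ∣ p
  refine Finset.prod_dvd_of_coprime ?_ ?_
  · intro a ha b hb hab
    simp only [Finset.coe_Ico, Set.mem_Ico] at ha hb
    refine isCoprime_X_sub_C_of_isUnit_sub ?_
    refine isUnit_iff_ne_zero.mpr (sub_ne_zero.mpr ?_)
    intro hθ
    exact hab (hdist a (by omega) b (by omega) hθ)
  · intro h hh
    rw [Finset.mem_Ico] at hh
    exact dvd_iff_isRoot.mpr (hroot h (Finset.mem_Icc.mpr ⟨hh.1, by omega⟩))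
end
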